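/- Complex moment problem: for any m ∈ ℕ there exist nonnegative weights w_j ≥ 0 and complex numbers α_j ∈ ℂ, j = 1,…,m², such that for all k, l ∈ {0,…,m−1}: ∑_{j=1}^{m²} w_j · ᾱ_j^k · α_j^l = k! if k = l and 0 otherwise. -/

import Mathlib

open MeasureTheory Set Polynomial

noncomputable def Lf (p : Polynomial ℝ) : ℝ := ∫ x in Ioi (0:ℝ), p.eval x * Real.exp (-x)

lemma integrable_pow_exp (k : ℕ) :
    IntegrableOn (fun x : ℝ => x ^ k * Real.exp (-x)) (Ioi 0) := by
  have h := Real.GammaIntegral_convergent (s := (k + 1 : ℝ)) (by positivity)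
  refine (h.congr_fun ?_ measurableSet_Ioi)
  intro x hx
  simp only [add_sub_cancel_right, Real.rpow_natCast, mul_comm]

lemma integral_pow_exp (k : ℕ) :
    ∫ x in Ioi (0:ℝ), x ^ k * Real.exp (-x) = k.factorial := by
  have h := Real.Gamma_eq_integral (s := (k + 1 : ℝ)) (by positivity)
  rw [← Real.Gamma_nat_eq_factorial, h]
  refine setIntegral_congr_fun measurableSet_Ioi fun x hx => ?_
  simp only [add_sub_cancel_right, Real.rpow_natCast, mul_comm]

lemma integrable_poly_exp (p : Polynomial ℝ) :
    IntegrableOn (fun x : ℝ => p.eval x * Real.exp (-x)) (Ioi 0) := by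
  have : (fun x : ℝ => p.eval x * Real.exp (-x)) =
      fun x => ∑ k ∈ Finset.range (p.natDegree + 1), p.coeff k * (x ^ k * Real.exp (-x)) := by
    funext x
    rw [eval_eq_sum_range, Finset.sum_mul]
    simp [mul_assoc]
  rw [this]
  exact integrable_finset_sum _ fun k _ => ((integrable_pow_exp k).const_mul _)

lemma Lf_add (p q : Polynomial ℝ) : Lf (p + q) = Lf p + Lf q := by
  unfold Lf
  simp only [eval_add, add_mul]
  exact integral_add (integrable_poly_exp p) (integrable_poly_exp q)

lemma Lf_const_mul (c : ℝ) (p : Polynomial ℝ) : Lf (C c * p) = c * Lf p := by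
  unfold Lf
  simp only [eval_mul, eval_C, mul_assoc]
  exact MeasureTheory.integral_const_mul c _

lemma Lf_pow (k : ℕ) : Lf (X ^ k) = k.factorial := by
  unfold Lf
  simpa using integral_pow_exp k

lemma Lf_nonneg {p : Polynomial ℝ} (hp : ∀ x > (0:ℝ), 0 ≤ p.eval x) : 0 ≤ Lf p :=
  setIntegral_nonneg measurableSet_Ioi fun x hx =>
    mul_nonneg (hp x hx) (Real.exp_pos _).le

lemma Lf_pos {p : Polynomial ℝ} (hp0 : p ≠ 0) (hp : ∀ x > (0:ℝ), 0 ≤ p.eval x) : 0 < Lf p := by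
  unfold Lf
  rw [setIntegral_pos_iff_support_of_nonneg_ae ?pos (integrable_poly_exp p)]
  case pos =>
    filter_upwards [ae_restrict_mem measurableSet_Ioi] with x hx
    exact mul_nonneg (hp x hx) (Real.exp_pos _).le
  · have hsub : Ioi (0:ℝ) \ {x | p.IsRoot x} ⊆
        Function.support (fun x => p.eval x * Real.exp (-x)) ∩ Ioi 0 := by
      rintro x ⟨hx1, hx2⟩
      refine ⟨?_, hx1⟩
      simp only [Function.mem_support]
      exact mul_ne_zero (fun h => hx2 h) (Real.exp_pos _).ne'
    calc (0:ENNReal) < volume (Ioi (0:ℝ) \ {x | p.IsRoot x}) := by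
          rw [measure_diff_null ((Polynomial.finite_setOf_isRoot hp0).measure_zero _)]
          simp
      _ ≤ _ := measure_mono hsub


lemma sign_const : ∀ (n : ℕ) (Q : Polynomial ℝ), Q.natDegree ≤ n → Q ≠ 0 →
    (∀ r > (0:ℝ), Even (Q.rootMultiplicity r)) →
    (∀ x > (0:ℝ), 0 ≤ Q.eval x) ∨ (∀ x > (0:ℝ), Q.eval x ≤ 0) := by
  intro n
  induction n using Nat.strong_induction_on with
  | _ n ih =>
    intro Q hdeg hQ hev
    by_cases hroot : ∃ r > (0:ℝ), Q.IsRoot r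
    · obtain ⟨r, hr, hroot⟩ := hroot
      set k := Q.rootMultiplicity r with hk
      have hk1 : 0 < k := (Q.rootMultiplicity_pos hQ).2 hroot
      set g := Q /ₘ (X - C r) ^ k with hg
      have hQg : (X - C r) ^ k * g = Q := Q.pow_mul_divByMonic_rootMultiplicity_eq r
      have hgr : g.eval r ≠ 0 := Q.eval_divByMonic_pow_rootMultiplicity_ne_zero r hQ
      have hg0 : g ≠ 0 := fun h => hgr (by simp [h])
      have hdg : g.natDegree < Q.natDegree := by
        have h2 := Polynomial.natDegree_mul (pow_ne_zero k (X_sub_C_ne_zero r)) hg0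
        rw [hQg] at h2
        rw [h2, natDegree_pow, natDegree_X_sub_C, mul_one]
        omega
      have hgev : ∀ r' > (0:ℝ), Even (g.rootMultiplicity r') := by
        intro r' hr'
        have hmul : Q.rootMultiplicity r' =
            ((X - C r) ^ k).rootMultiplicity r' + g.rootMultiplicity r' := by
          rw [← hQg] at hev ⊢
          exact rootMultiplicity_mul (by rw [hQg]; exact hQ)
        by_cases hrr : r' = r
        · subst hrr
          rw [rootMultiplicity_X_sub_C_pow] at hmul
          have : g.rootMultiplicity r' = 0 :=
            rootMultiplicity_eq_zero hgr
          simp [this]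
        · have : ((X - C r) ^ k).rootMultiplicity r' = 0 := by
            apply rootMultiplicity_eq_zero
            intro h
            apply hrr
            simp only [IsRoot, eval_pow, eval_sub, eval_X, eval_C] at h
            have := pow_eq_zero_iff hk1.ne' |>.mp h
            linarith [sub_eq_zero.mp this]
          have h2 := hev r' hr'
          rw [hmul, this, zero_add] at h2
          exact h2
      have hkev : Even k := by
        have := hev r hr
        rwa [← hk] at this
      have hsg := ih g.natDegree (lt_of_lt_of_le hdg hdeg) g le_rfl hg0 hgev
      have key : ∀ x : ℝ, Q.eval x = (x - r) ^ k * g.eval x := by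
        intro x; rw [← hQg]; simp
      rcases hsg with h | h
      · left; intro x hx
        rw [key]
        exact mul_nonneg (hkev.pow_nonneg _) (h x hx)
      · right; intro x hx
        rw [key]
        exact mul_nonpos_of_nonneg_of_nonpos (hkev.pow_nonneg _) (h x hx)
    · push_neg at hroot
      by_contra hcon
      push_neg at hcon
      obtain ⟨⟨a, ha, hae⟩, ⟨b, hb, hbe⟩⟩ := hcon
      have hcont : ContinuousOn (fun x => Q.eval x) (uIcc a b) := (Q.continuous_aeval).continuousOn
      have h0 : (0:ℝ) ∈ uIcc (Q.eval a) (Q.eval b) := by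
        rw [Set.mem_uIcc]
        left; exact ⟨le_of_lt hae, le_of_lt hbe⟩
      have := intermediate_value_uIcc hcont h0
      obtain ⟨c, hc, hce⟩ := this
      have hcpos : 0 < c := lt_of_lt_of_le (lt_min ha hb) (by
        rcases Set.mem_uIcc.mp hc with h | h
        · exact le_trans (min_le_left _ _) h.1
        · exact le_trans (min_le_right _ _) h.1)
      exact hroot c hcpos hce


lemma Lf_zero : Lf 0 = 0 := by unfold Lf; simp

lemma Lf_sum {ι : Type*} (s : Finset ι) (f : ι → Polynomial ℝ) :
    Lf (∑ i ∈ s, f i) = ∑ i ∈ s, Lf (f i) := by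
  induction s using Finset.cons_induction with
  | empty => simpa using Lf_zero
  | cons i s hi ih => rw [Finset.sum_cons, Finset.sum_cons, Lf_add, ih]

lemma Lf_neg (p : Polynomial ℝ) : Lf (-p) = - Lf p := by
  have := Lf_const_mul (-1) p
  simpa using this

lemma Lf_CXpow (c : ℝ) (k : ℕ) : Lf (C c * X ^ k) = c * k.factorial := by
  rw [Lf_const_mul, Lf_pow]

/-- The key real quadrature lemma. -/
theorem quad (m : ℕ) (hm : 0 < m) : ∃ (x w : Fin m → ℝ),
    (∀ s, 0 < x s) ∧ (∀ s, 0 ≤ w s) ∧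
    ∀ k, k < m → ∑ s, w s * x s ^ k = k.factorial := by
  classical
  -- Hankel matrix
  set H : Matrix (Fin m) (Fin m) ℝ :=
    Matrix.of (fun k i : Fin m => (((k:ℕ) + (i:ℕ)).factorial : ℝ)) with hH
  -- the quadratic form identity
  have hquadform : ∀ a : Fin m → ℝ,
      Lf ((∑ j, C (a j) * X ^ (j:ℕ)) * (∑ i, C (a i) * X ^ (i:ℕ)))
        = ∑ j, a j * (H.mulVec a j) := by
    intro a
    rw [Finset.sum_mul_sum]
    have : ∀ j i : Fin m, (C (a j) * X ^ (j:ℕ)) * (C (a i) * X ^ (i:ℕ))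
        = C (a j * a i) * X ^ ((j:ℕ) + (i:ℕ)) := by
      intro j i; rw [mul_mul_mul_comm, ← C_mul, ← pow_add]
    simp_rw [this, Lf_sum, Lf_CXpow, Matrix.mulVec, dotProduct, hH, Matrix.of_apply,
      Finset.mul_sum]
    refine Finset.sum_congr rfl fun j _ => Finset.sum_congr rfl fun i _ => by ring
  -- injectivity of the Hankel matrix
  have hinj : Function.Injective H.mulVecLin := by
    rw [← LinearMap.ker_eq_bot, LinearMap.ker_eq_bot']
    intro a ha
    rw [Matrix.mulVecLin_apply] at ha
    by_contra hne
    have hq0 : (∑ j, C (a j) * X ^ (j:ℕ)) ≠ 0 := by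
      intro h
      apply hne
      funext i
      have : (∑ j, C (a j) * X ^ (j:ℕ)).coeff (i:ℕ) = a i := by
        rw [finset_sum_coeff]
        rw [Finset.sum_eq_single i]
        · simp
        · intro j _ hji
          rw [coeff_C_mul, coeff_X_pow, if_neg (by
            intro hc; exact hji (Fin.ext (by omega)))]
          ring
        · simp
      rw [h] at this
      simpa using this.symm
    have hpos : 0 < Lf ((∑ j, C (a j) * X ^ (j:ℕ)) * (∑ i, C (a i) * X ^ (i:ℕ))) := by
      apply Lf_pos (mul_ne_zero hq0 hq0)
      intro x hx
      rw [eval_mul]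
      exact mul_self_nonneg _
    rw [hquadform a, ha] at hpos
    simp at hpos
  have hsurj := (LinearMap.injective_iff_surjective (f := H.mulVecLin)).mp hinj
  obtain ⟨a, ha'⟩ := hsurj (fun k : Fin m => -(((m + (k:ℕ)).factorial : ℝ)))
  have ha : H.mulVec a = (fun k : Fin m => -(((m + (k:ℕ)).factorial : ℝ))) := by
    rw [← Matrix.mulVecLin_apply, ha']
  -- the orthogonal polynomial
  set P : Polynomial ℝ := X ^ m + ∑ j : Fin m, C (a j) * X ^ (j:ℕ) with hPdef
  have hlowdeg : (∑ j : Fin m, C (a j) * X ^ (j:ℕ)).degree < (m : WithBot ℕ) := by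
    apply lt_of_le_of_lt (degree_sum_le _ _)
    rw [Finset.sup_lt_iff (by exact_mod_cast WithBot.bot_lt_coe m)]
    intro j _
    apply lt_of_le_of_lt (degree_C_mul_X_pow_le _ _)
    exact_mod_cast j.2
  have hPmonic : P.Monic := monic_X_pow_add hlowdeg
  have hPdeg : P.degree = (m : WithBot ℕ) := by
    rw [hPdef, degree_add_eq_left_of_degree_lt (by rwa [degree_X_pow]), degree_X_pow]
  have hPnat : P.natDegree = m := natDegree_eq_of_degree_eq_some hPdeg
  have hP0 : P ≠ 0 := hPmonic.ne_zero
  -- orthogonality against monomials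
  have horthX : ∀ k : Fin m, Lf (P * X ^ (k:ℕ)) = 0 := by
    intro k
    have hPX : P * X ^ (k:ℕ)
        = X ^ (m + (k:ℕ)) + ∑ j : Fin m, C (a j) * X ^ ((j:ℕ) + (k:ℕ)) := by
      rw [hPdef, add_mul, Finset.sum_mul, ← pow_add]
      congr 1
      exact Finset.sum_congr rfl fun j _ => by rw [mul_assoc, ← pow_add]
    rw [hPX, Lf_add, Lf_pow, Lf_sum]
    simp_rw [Lf_CXpow]
    have hk := congrFun ha k
    rw [Matrix.mulVec, hH] at hk
    simp only [dotProduct, Matrix.of_apply] at hk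
    have : ∑ j : Fin m, a j * (((j:ℕ) + (k:ℕ)).factorial : ℝ)
        = ∑ i : Fin m, (((k:ℕ) + (i:ℕ)).factorial : ℝ) * a i := by
      exact Finset.sum_congr rfl fun j _ => by rw [add_comm (j:ℕ) (k:ℕ), mul_comm]
    rw [this, hk]
    ring
  -- orthogonality against all low-degree polynomials
  have horth : ∀ q : Polynomial ℝ, q.natDegree < m → Lf (P * q) = 0 := by
    intro q hq
    conv_lhs => rw [q.as_sum_range' m hq, Finset.mul_sum]
    have hcong : ∀ k ∈ Finset.range m,
        P * (monomial k (q.coeff k)) = C (q.coeff k) * (P * X ^ k) := by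
      intro k _; rw [← C_mul_X_pow_eq_monomial]; ring
    rw [Finset.sum_congr rfl hcong, Lf_sum]
    simp_rw [Lf_const_mul]
    apply Finset.sum_eq_zero
    intro k hk
    have := horthX ⟨k, Finset.mem_range.mp hk⟩
    simp only at this
    rw [this, mul_zero]
  -- the set of positive roots of odd multiplicity
  set S : Finset ℝ := P.roots.toFinset.filter
      (fun r => 0 < r ∧ Odd (P.rootMultiplicity r)) with hS
  set q : Polynomial ℝ := (S.val.map (fun r => X - C r)).prod with hqdef
  have hq_monic : q.Monic :=
    monic_multiset_prod_of_monic _ _ (fun r _ => monic_X_sub_C r)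
  have hq0 : q ≠ 0 := hq_monic.ne_zero
  have hqroots : q.roots = S.val := roots_multiset_prod_X_sub_C _
  have hqdeg : q.natDegree = S.card := by
    rw [hqdef, natDegree_multiset_prod_of_monic _
      (by intro f hf; obtain ⟨r, _, rfl⟩ := Multiset.mem_map.mp hf; exact monic_X_sub_C r)]
    rw [Multiset.map_map]
    simp only [Function.comp_apply, natDegree_X_sub_C]
    rw [Multiset.map_const', Multiset.sum_replicate, smul_eq_mul, mul_one]
    rfl
  have hqmult : ∀ r : ℝ, q.rootMultiplicity r = if r ∈ S then 1 else 0 := by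
    intro r
    rw [← count_roots, hqroots, Multiset.count_eq_of_nodup S.nodup]
    rfl
  have hQ0 : P * q ≠ 0 := mul_ne_zero hP0 hq0
  have hQeven : ∀ r > (0:ℝ), Even ((P * q).rootMultiplicity r) := by
    intro r hr
    rw [rootMultiplicity_mul hQ0, hqmult r]
    by_cases hodd : Odd (P.rootMultiplicity r)
    · have hrS : r ∈ S := by
        rw [hS]
        refine Finset.mem_filter.mpr ⟨Multiset.mem_toFinset.mpr ?_, hr, hodd⟩
        rw [mem_roots hP0]
        exact (rootMultiplicity_pos hP0).mp
          (Nat.pos_of_ne_zero (fun h => by simp [h] at hodd))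
      rw [if_pos hrS]
      exact hodd.add_one
    · have hrS : r ∉ S := by
        rw [hS]
        intro hmem
        exact hodd (Finset.mem_filter.mp hmem).2.2
      rw [if_neg hrS, add_zero]
      exact Nat.not_odd_iff_even.mp hodd
  have hLfQ : Lf (P * q) ≠ 0 := by
    rcases sign_const (P * q).natDegree (P * q) le_rfl hQ0 hQeven with h | h
    · exact (Lf_pos hQ0 h).ne'
    · have hneg := Lf_pos (p := -(P * q)) (neg_ne_zero.mpr hQ0)
        (by intro y hy; simpa using h y hy)
      rw [Lf_neg] at hneg
      intro h0
      rw [h0] at hneg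
      simp at hneg
  have hScard : S.card = m := by
    refine le_antisymm ?_ ?_
    · calc S.card ≤ P.roots.toFinset.card := Finset.card_filter_le _ _
        _ ≤ Multiset.card P.roots := Multiset.toFinset_card_le _
        _ ≤ P.natDegree := P.card_roots'
        _ = m := hPnat
    · by_contra hlt
      push_neg at hlt
      exact hLfQ (horth q (by rw [hqdeg]; exact hlt))
  -- enumerate the roots
  let e : Fin m ≃ {y // y ∈ S} := ((S.equivFin).trans (finCongr hScard)).symm
  set x : Fin m → ℝ := fun s => (e s : ℝ) with hx
  have hxS : ∀ s, x s ∈ S := fun s => (e s).2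
  have hx_inj : Function.Injective x := fun s t h => e.injective (Subtype.ext h)
  have hx_pos : ∀ s, 0 < x s := fun s => ((Finset.mem_filter.mp (hxS s)).2).1
  have hx_root : ∀ s, P.eval (x s) = 0 := fun s =>
    (mem_roots'.mp (Multiset.mem_toFinset.mp (Finset.mem_filter.mp (hxS s)).1)).2
  -- Lagrange weights
  have hinjOn : Set.InjOn x ↑(Finset.univ : Finset (Fin m)) := fun s _ t _ h => hx_inj h
  set w : Fin m → ℝ := fun s => Lf (Lagrange.basis Finset.univ x s) with hw
  have hcard : (Finset.univ : Finset (Fin m)).card = m := by simp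
  have hexact : ∀ r : Polynomial ℝ, r.degree < (m : WithBot ℕ) →
      Lf r = ∑ s, w s * r.eval (x s) := by
    intro r hr
    have hint := Lagrange.eq_interpolate (s := Finset.univ) (v := x) hinjOn
      (f := r) (by rwa [hcard])
    conv_lhs => rw [hint]
    rw [Lagrange.interpolate_apply, Lf_sum]
    simp_rw [Lf_const_mul]
    exact Finset.sum_congr rfl fun s _ => mul_comm _ _
  have hexact2 : ∀ f : Polynomial ℝ, f.natDegree ≤ 2 * m - 1 →
      Lf f = ∑ s, w s * f.eval (x s) := by
    intro f hf
    have hdiv := modByMonic_add_div f P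
    have hgdeg : (f /ₘ P).natDegree < m := by
      rw [natDegree_divByMonic f hPmonic, hPnat]
      omega
    have hLr : Lf (f %ₘ P) = ∑ s, w s * (f %ₘ P).eval (x s) := by
      apply hexact
      have := degree_modByMonic_lt f hPmonic
      rwa [hPdeg] at this
    calc Lf f = Lf (f %ₘ P + P * (f /ₘ P)) := by rw [hdiv]
      _ = Lf (f %ₘ P) + Lf (P * (f /ₘ P)) := Lf_add _ _
      _ = ∑ s, w s * (f %ₘ P).eval (x s) := by rw [horth _ hgdeg, add_zero, hLr]
      _ = ∑ s, w s * f.eval (x s) := by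
          refine Finset.sum_congr rfl fun s _ => ?_
          congr 1
          conv_rhs => rw [← hdiv]
          rw [eval_add, eval_mul, hx_root, zero_mul, add_zero]
  have hwnn : ∀ s, 0 ≤ w s := by
    intro s
    have hbdeg : (Lagrange.basis Finset.univ x s).natDegree = m - 1 := by
      rw [Lagrange.natDegree_basis hinjOn (Finset.mem_univ s), hcard]
    have hsq : ((Lagrange.basis Finset.univ x s) ^ 2).natDegree ≤ 2 * m - 1 := by
      rw [natDegree_pow, hbdeg]
      omega
    have h1 := hexact2 _ hsq
    have h2 : Lf ((Lagrange.basis Finset.univ x s) ^ 2) = w s := by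
      rw [h1, Finset.sum_eq_single s]
      · rw [eval_pow, Lagrange.eval_basis_self hinjOn (Finset.mem_univ s)]
        ring
      · intro t _ hts
        rw [eval_pow, Lagrange.eval_basis_of_ne hts.symm (Finset.mem_univ t)]
        ring
      · intro h
        exact absurd (Finset.mem_univ s) h
    rw [← h2]
    apply Lf_nonneg
    intro y hy
    rw [eval_pow]
    positivity
  refine ⟨x, w, hx_pos, hwnn, ?_⟩
  intro k hk
  have hXk := hexact (X ^ k) (by rw [degree_X_pow]; exact_mod_cast hk)
  rw [Lf_pow] at hXk
  simp only [eval_pow, eval_X] at hXk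
  exact hXk.symm

open Complex in
theorem complex_moment_problem (m : ℕ) :
    ∃ (w : Fin (m ^ 2) → ℝ) (α : Fin (m ^ 2) → ℂ),
      (∀ j, 0 ≤ w j) ∧
      ∀ k l : ℕ, k < m → l < m →
        ∑ j, (w j : ℂ) * ((starRingEnd ℂ) (α j)) ^ k * (α j) ^ l
          = if k = l then (k.factorial : ℂ) else 0 := by
  rcases Nat.eq_zero_or_pos m with hm | hm
  · exact ⟨0, 0, fun j => le_rfl, fun k l hk hl => absurd hk (by omega)⟩
  obtain ⟨x, w, hxpos, hwnn, hmom⟩ := quad m hm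
  set ζ : ℂ := Complex.exp (2 * Real.pi * Complex.I / m) with hζ
  have hprim : IsPrimitiveRoot ζ m := by
    exact Complex.isPrimitiveRoot_exp m hm.ne'
  have hconj : (starRingEnd ℂ) ζ * ζ = 1 := by
    rw [hζ, ← Complex.exp_conj, ← Complex.exp_add]
    have hc : (starRingEnd ℂ) (2 * Real.pi * Complex.I / m) = -(2 * Real.pi * Complex.I / m) := by
      simp only [map_div₀, map_mul, Complex.conj_I, Complex.conj_ofReal, map_ofNat,
        Complex.conj_natCast]
      ring
    rw [hc, neg_add_cancel, Complex.exp_zero]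
  have hmC : (m : ℂ) ≠ 0 := Nat.cast_ne_zero.mpr hm.ne'
  let E : Fin m × Fin m ≃ Fin (m ^ 2) := finProdFinEquiv.trans (finCongr (pow_two m).symm)
  refine ⟨fun j => w (E.symm j).1 / m, fun j =>
    (Real.sqrt (x (E.symm j).1) : ℂ) * ζ ^ ((E.symm j).2 : ℕ), ?_, ?_⟩
  · intro j
    exact div_nonneg (hwnn _) (Nat.cast_nonneg m)
  intro k l hk hl
  rw [← Equiv.sum_comp E]
  simp only [Equiv.symm_apply_apply]
  rw [Fintype.sum_prod_type]
  set u : ℂ := ((starRingEnd ℂ) ζ) ^ k * ζ ^ l with hu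
  have hterm : ∀ (s t : Fin m),
      ((w s / m : ℝ) : ℂ) * ((starRingEnd ℂ) ((Real.sqrt (x s) : ℂ) * ζ ^ (t:ℕ))) ^ k *
        ((Real.sqrt (x s) : ℂ) * ζ ^ (t:ℕ)) ^ l
      = ((w s / m : ℝ) : ℂ) * (Real.sqrt (x s) : ℂ) ^ (k + l) * u ^ (t:ℕ) := by
    intro s t
    rw [map_mul, Complex.conj_ofReal, map_pow]
    rw [hu]
    ring
  simp only [hterm]
  by_cases hkl : k = l
  · subst hkl
    have hu1 : u = 1 := by
      rw [hu, ← mul_pow, hconj, one_pow]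
    simp only [hu1, one_pow, if_pos rfl]
    have hsq : ∀ s : Fin m, ((Real.sqrt (x s) : ℂ)) ^ (k + k) = ((x s : ℝ) : ℂ) ^ k := by
      intro s
      rw [← Complex.ofReal_pow, ← Complex.ofReal_pow]
      congr 1
      rw [← two_mul, pow_mul, Real.sq_sqrt (hxpos s).le]
    calc ∑ s : Fin m, ∑ _t : Fin m,
          ((w s / m : ℝ) : ℂ) * (Real.sqrt (x s) : ℂ) ^ (k + k) * 1
        = ∑ s : Fin m, ((w s * x s ^ k : ℝ) : ℂ) := by
          refine Finset.sum_congr rfl fun s _ => ?_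
          rw [Finset.sum_const, hsq s]
          simp only [Finset.card_univ, Fintype.card_fin, nsmul_eq_mul, mul_one]
          push_cast
          field_simp
      _ = ((k.factorial : ℝ) : ℂ) := by
          rw [← Complex.ofReal_sum]
          norm_cast
          exact hmom k hk
      _ = (k.factorial : ℂ) := by norm_cast
  · rw [if_neg hkl]
    have hζ0 : ζ ≠ 0 := Complex.exp_ne_zero _
    have hcm : ((starRingEnd ℂ) ζ) ^ m = 1 := by
      rw [← map_pow, hprim.pow_eq_one, map_one]
    have hum : u ^ m = 1 := by
      rw [hu, mul_pow, ← pow_mul, ← pow_mul, mul_comm k m, mul_comm l m, pow_mul, pow_mul,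
        hcm, hprim.pow_eq_one, one_pow, one_pow, one_mul]
    have hinv : ((starRingEnd ℂ) ζ) ^ k = (ζ ^ k)⁻¹ := by
      apply eq_inv_of_mul_eq_one_left
      rw [← mul_pow, hconj, one_pow]
    have hune : u ≠ 1 := by
      intro h1
      apply hkl
      rw [hu, hinv] at h1
      have h2 : ζ ^ l = ζ ^ k := by
        calc ζ ^ l = ζ ^ k * ((ζ ^ k)⁻¹ * ζ ^ l) := by
              rw [← mul_assoc, mul_inv_cancel₀ (pow_ne_zero k hζ0), one_mul]
          _ = ζ ^ k := by rw [h1, mul_one]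
      exact hprim.pow_inj hk hl h2.symm
    have hgeom : ∑ t : Fin m, u ^ (t:ℕ) = 0 := by
      rw [Fin.sum_univ_eq_sum_range (fun i => u ^ i)]
      rw [geom_sum_eq hune, hum]
      simp
    calc ∑ s : Fin m, ∑ t : Fin m,
          ((w s / m : ℝ) : ℂ) * (Real.sqrt (x s) : ℂ) ^ (k + l) * u ^ (t:ℕ)
        = ∑ s : Fin m, ((w s / m : ℝ) : ℂ) * (Real.sqrt (x s) : ℂ) ^ (k + l) *
            (∑ t : Fin m, u ^ (t:ℕ)) := by
          refine Finset.sum_congr rfl fun s _ => ?_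
          rw [Finset.mul_sum]
      _ = 0 := by
          rw [hgeom]
          simp
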